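/- Every graph with maximum degree at most 2 in which every component has at least 2 vertices satisfies χ_pcf(G) ≤ 5; in particular, every cycle Cn satisfies χ_pcf(Cn) ≤ 5, and χ_pcf(C5) = 5. -/

import Mathlib

/-- A proper conflict-free (PCF) coloring: a proper coloring such that every
non-isolated vertex has some color appearing exactly once in its neighborhood. -/
def IsPCFColoring {V α : Type*} (G : SimpleGraph V) (φ : V → α) : Prop :=
  (∀ u v : V, G.Adj u v → φ u ≠ φ v) ∧
  ∀ v : V, (∃ u, G.Adj v u) → ∃ c : α, {u : V | G.Adj v u ∧ φ u = c}.ncard = 1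

/-- The PCF chromatic number: the minimum number of colors in a PCF coloring. -/
noncomputable def pcfChromaticNumber {V : Type*} (G : SimpleGraph V) : ℕ :=
  sInf {k : ℕ | ∃ φ : V → Fin k, IsPCFColoring G φ}

/-- Every (finite) graph of maximum degree at most 2 in which every
component has at least 2 vertices (equivalently, there are no isolated vertices)
satisfies `χ_pcf(G) ≤ 5`; in particular every cycle `Cn` (`n ≥ 3`) satisfies
`χ_pcf(Cn) ≤ 5`, and `χ_pcf(C5) = 5`. -/
lemma greedy {V : Type} [Fintype V] (H : SimpleGraph V)
    (hdeg : ∀ v : V, (H.neighborSet v).ncard ≤ 4) (s : Finset V) :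
    ∃ φ : V → Fin 5, ∀ u ∈ s, ∀ v ∈ s, H.Adj u v → φ u ≠ φ v := by
  classical
  induction s using Finset.induction with
  | empty => exact ⟨fun _ => 0, by simp⟩
  | @insert a s ha ih =>
    obtain ⟨φ, hφ⟩ := ih
    have hsub : φ '' {u | H.Adj a u ∧ u ∈ s} ⊆ φ '' H.neighborSet a := by
      apply Set.image_mono; intro u hu; exact hu.1
    have hcard : (φ '' {u | H.Adj a u ∧ u ∈ s}).ncard ≤ 4 := by
      refine le_trans (Set.ncard_le_ncard hsub ?_) ?_
      · exact ((H.neighborSet a).toFinite.image φ)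
      · exact le_trans (Set.ncard_image_le (H.neighborSet a).toFinite) (hdeg a)
    have : ∃ c : Fin 5, c ∉ φ '' {u | H.Adj a u ∧ u ∈ s} := by
      by_contra h
      push_neg at h
      have : (Set.univ : Set (Fin 5)).ncard ≤ 4 := by
        refine le_trans (Set.ncard_le_ncard (fun c _ => h c) ?_) hcard
        exact Set.toFinite _
      simp [Set.ncard_univ] at this
    obtain ⟨c, hc⟩ := this
    refine ⟨Function.update φ a c, ?_⟩
    intro u hu v hv hadj
    rcases Finset.mem_insert.mp hu with rfl | hu' <;>
      rcases Finset.mem_insert.mp hv with rfl | hv'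
    · exact absurd hadj (H.irrefl)
    · have hva : v ≠ u := fun h => ha (h ▸ hv')
      rw [Function.update_self, Function.update_of_ne hva]
      intro h
      exact hc ⟨v, ⟨hadj, hv'⟩, h.symm⟩
    · have hua : u ≠ v := fun h => ha (h ▸ hu')
      rw [Function.update_self, Function.update_of_ne hua]
      intro h
      exact hc ⟨u, ⟨hadj.symm, hu'⟩, h⟩
    · have h1 : u ≠ a := fun h => ha (h ▸ hu')
      have h2 : v ≠ a := fun h => ha (h ▸ hv')
      rw [Function.update_of_ne h1, Function.update_of_ne h2]
      exact hφ u hu' v hv' hadj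

lemma pcf_exists {V : Type} [Fintype V] (G : SimpleGraph V)
    (h2 : ∀ v : V, (G.neighborSet v).ncard ≤ 2)
    (h1 : ∀ v : V, 0 < (G.neighborSet v).ncard) :
    ∃ φ : V → Fin 5, IsPCFColoring G φ := by
  classical
  -- the square graph
  set H : SimpleGraph V := {
    Adj := fun u v => u ≠ v ∧ (G.Adj u v ∨ ∃ w, G.Adj w u ∧ G.Adj w v)
    symm := ⟨by
      rintro u v ⟨hne, h⟩
      exact ⟨hne.symm, by tauto⟩⟩
    loopless := ⟨fun v h => h.1 rfl⟩ } with hH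
  have hHadj : ∀ u v, H.Adj u v ↔ u ≠ v ∧ (G.Adj u v ∨ ∃ w, G.Adj w u ∧ G.Adj w v) := by
    intro u v; rfl
  have hdiff : ∀ a v : V, G.Adj v a → (G.neighborSet a \ {v}).ncard ≤ 1 := by
    intro a v hva
    have hv : (v : V) ∈ G.neighborSet a := hva.symm
    have := Set.ncard_diff_singleton_add_one hv (Set.toFinite _)
    have := h2 a
    omega
  have hdegH : ∀ v : V, (H.neighborSet v).ncard ≤ 4 := by
    intro v
    obtain ⟨a, ha⟩ := (Set.ncard_pos (Set.toFinite _)).mp (h1 v)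
    have hab : ∃ b, b ∈ G.neighborSet v ∧ G.neighborSet v ⊆ {a, b} := by
      by_cases h : G.neighborSet v ⊆ {a}
      · exact ⟨a, ha, h.trans (by simp)⟩
      · rw [Set.not_subset] at h
        obtain ⟨b, hb, hbne⟩ := h
        simp only [Set.mem_singleton_iff] at hbne
        refine ⟨b, hb, fun c hc => ?_⟩
        by_contra hcm
        simp only [Set.mem_insert_iff, Set.mem_singleton_iff, not_or] at hcm
        have hsub : ({a, b, c} : Set V) ⊆ G.neighborSet v := by
          intro x hx
          rcases hx with rfl | rfl | rfl
          · exact ha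
          · exact hb
          · exact hc
        have h3 : ({a, b, c} : Set V).ncard = 3 := by
          rw [Set.ncard_insert_of_notMem (by
            simp only [Set.mem_insert_iff, Set.mem_singleton_iff]
            push_neg
            exact ⟨fun h => hbne h.symm, fun h => hcm.1 h.symm⟩) (Set.toFinite _),
            Set.ncard_pair (Ne.symm hcm.2)]
        have := Set.ncard_le_ncard hsub (Set.toFinite _)
        have := h2 v
        omega
    obtain ⟨b, hbm, hb⟩ := hab
    have hsub : H.neighborSet v ⊆ G.neighborSet v ∪ ((G.neighborSet a \ {v}) ∪ (G.neighborSet b \ {v})) := by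
      intro u hu
      rw [SimpleGraph.mem_neighborSet, hHadj] at hu
      obtain ⟨hne, hGadj | ⟨w, hw1, hw2⟩⟩ := hu
      · exact Or.inl hGadj
      · have hw : w ∈ G.neighborSet v := hw1.symm
        rcases hb hw with rfl | rfl
        · exact Or.inr (Or.inl ⟨hw2, by simpa using hne.symm⟩)
        · exact Or.inr (Or.inr ⟨hw2, by simpa using hne.symm⟩)
    calc (H.neighborSet v).ncard ≤ _ := Set.ncard_le_ncard hsub (Set.toFinite _)
      _ ≤ (G.neighborSet v).ncard + ((G.neighborSet a \ {v}) ∪ (G.neighborSet b \ {v})).ncard :=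
          Set.ncard_union_le _ _
      _ ≤ (G.neighborSet v).ncard + ((G.neighborSet a \ {v}).ncard + (G.neighborSet b \ {v}).ncard) := by
          exact Nat.add_le_add_left (Set.ncard_union_le _ _) _
      _ ≤ 4 := by
          have d1 := hdiff a v ha
          have d2 := hdiff b v hbm
          have := h2 v
          omega
  obtain ⟨φ, hφ⟩ := greedy H hdegH Finset.univ
  have hφ' : ∀ u v : V, H.Adj u v → φ u ≠ φ v := fun u v h =>
    hφ u (Finset.mem_univ u) v (Finset.mem_univ v) h
  refine ⟨φ, ⟨fun u v huv => hφ' u v ((hHadj u v).mpr ⟨huv.ne, Or.inl huv⟩), ?_⟩⟩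
  intro v ⟨u, hu⟩
  refine ⟨φ u, ?_⟩
  have : {u' : V | G.Adj v u' ∧ φ u' = φ u} = {u} := by
    ext x
    simp only [Set.mem_setOf_eq, Set.mem_singleton_iff]
    constructor
    · rintro ⟨hx, hfx⟩
      by_contra hne
      exact hφ' x u ((hHadj x u).mpr ⟨hne, Or.inr ⟨v, hx, hu⟩⟩) hfx
    · rintro rfl; exact ⟨hu, rfl⟩
  rw [this, Set.ncard_singleton]

lemma c5_inj {k : ℕ} (φ : Fin 5 → Fin k)
    (h : IsPCFColoring (SimpleGraph.cycleGraph 5) φ) : Function.Injective φ := by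
  have hne : ∀ w : Fin 5, w - 1 ≠ w + 1 := by decide
  have hadjsucc : ∀ w : Fin 5, (SimpleGraph.cycleGraph 5).Adj w (w + 1) := by decide
  have hsecond : ∀ w : Fin 5, φ (w - 1) ≠ φ (w + 1) := by
    intro w heq
    obtain ⟨c, hc⟩ := h.2 w ⟨w + 1, hadjsucc w⟩
    have hset : {u : Fin 5 | (SimpleGraph.cycleGraph 5).Adj w u ∧ φ u = c} =
        {u : Fin 5 | (u = w - 1 ∨ u = w + 1) ∧ φ u = c} := by
      ext x
      have : (SimpleGraph.cycleGraph 5).Adj w x ↔ x ∈ (SimpleGraph.cycleGraph 5).neighborSet w :=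
        Iff.rfl
      rw [Set.mem_setOf_eq, Set.mem_setOf_eq, this,
        SimpleGraph.cycleGraph_neighborSet (n := 3)]
      simp [Set.mem_insert_iff]
    rw [hset] at hc
    by_cases hcval : c = φ (w + 1)
    · have : {u : Fin 5 | (u = w - 1 ∨ u = w + 1) ∧ φ u = c} = {w - 1, w + 1} := by
        ext x
        simp only [Set.mem_setOf_eq, Set.mem_insert_iff, Set.mem_singleton_iff]
        constructor
        · exact fun h => h.1
        · rintro (rfl | rfl)
          · exact ⟨Or.inl rfl, by rw [heq, hcval]⟩
          · exact ⟨Or.inr rfl, hcval.symm⟩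
      rw [this, Set.ncard_pair (hne w)] at hc
      omega
    · have : {u : Fin 5 | (u = w - 1 ∨ u = w + 1) ∧ φ u = c} = ∅ := by
        ext x
        simp only [Set.mem_setOf_eq, Set.mem_empty_iff_false, iff_false, not_and]
        rintro (rfl | rfl)
        · rw [heq]; exact fun hh => hcval hh.symm
        · exact fun hh => hcval hh.symm
      rw [this, Set.ncard_empty] at hc
      omega
  intro u v hphi
  by_contra hne'
  have hcases : ∀ u v : Fin 5, u ≠ v → (SimpleGraph.cycleGraph 5).Adj u v ∨
      (∃ w, w - 1 = u ∧ w + 1 = v) ∨ (∃ w, w - 1 = v ∧ w + 1 = u) := by decide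
  rcases hcases u v hne' with hadj | ⟨w, rfl, rfl⟩ | ⟨w, rfl, rfl⟩
  · exact h.1 u v hadj hphi
  · exact hsecond w hphi
  · exact hsecond w hphi.symm

lemma cycle_ncard {m : ℕ} (v : Fin (m + 3)) :
    ((SimpleGraph.cycleGraph (m + 3)).neighborSet v).ncard = 2 := by
  classical
  have hd := SimpleGraph.cycleGraph_degree_three_le (n := m) (v := v)
  rw [SimpleGraph.degree] at hd
  rw [Set.ncard_eq_toFinset_card']
  rw [← hd]
  congr 1

theorem pcf_max_degree_two_le_five :
    (∀ (V : Type) (_ : Fintype V) (G : SimpleGraph V),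
      (∀ v : V, (G.neighborSet v).ncard ≤ 2) →
      (∀ v : V, 0 < (G.neighborSet v).ncard) →
      pcfChromaticNumber G ≤ 5) ∧
    (∀ n : ℕ, 3 ≤ n → pcfChromaticNumber (SimpleGraph.cycleGraph n) ≤ 5) ∧
    pcfChromaticNumber (SimpleGraph.cycleGraph 5) = 5 := by
  have part1 : ∀ (V : Type) (_ : Fintype V) (G : SimpleGraph V),
      (∀ v : V, (G.neighborSet v).ncard ≤ 2) →
      (∀ v : V, 0 < (G.neighborSet v).ncard) →
      pcfChromaticNumber G ≤ 5 := by
    intro V _ G h2 h1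
    obtain ⟨φ, hφ⟩ := pcf_exists G h2 h1
    exact Nat.sInf_le ⟨φ, hφ⟩
  have part2 : ∀ n : ℕ, 3 ≤ n → pcfChromaticNumber (SimpleGraph.cycleGraph n) ≤ 5 := by
    intro n hn
    obtain ⟨m, rfl⟩ : ∃ m, n = m + 3 := ⟨n - 3, by omega⟩
    exact part1 (Fin (m + 3)) inferInstance _
      (fun v => le_of_eq (cycle_ncard v)) (fun v => by rw [cycle_ncard]; omega)
  refine ⟨part1, part2, le_antisymm (part2 5 (by norm_num)) ?_⟩
  have hne : ∃ φ : Fin 5 → Fin 5, IsPCFColoring (SimpleGraph.cycleGraph 5) φ :=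
    pcf_exists _ (fun v => le_of_eq (cycle_ncard (m := 2) v))
      (fun v => by rw [cycle_ncard (m := 2)]; omega)
  refine le_csInf ⟨5, hne⟩ ?_
  rintro k ⟨φ, hφ⟩
  have := Fintype.card_le_of_injective φ (c5_inj φ hφ)
  simpa using this
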